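/- In the q-Weyl algebra A_q with relation ∂x = q x ∂ + (q-1) and q a unit, the powers of the Euler operator α = 1 + x∂ form a (left and right) Ore set: for every a ∈ A_q and n ≥ 1 there exist b ∈ A_q and m ≥ 1 with αᵐ a = b αⁿ. -/
import Mathlib


/-- The defining relation of the `q`-Weyl algebra: `∂x = q x∂ + (q-1)·1`. -/
inductive qWeylRel (K : Type) [CommRing K] (q : K) :
    FreeAlgebra K (Fin 2) → FreeAlgebra K (Fin 2) → Prop
  | rel : qWeylRel K q (FreeAlgebra.ι K 1 * FreeAlgebra.ι K 0)
      (q • (FreeAlgebra.ι K 0 * FreeAlgebra.ι K 1) + (q - 1) • (1 : FreeAlgebra K (Fin 2)))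

/-- The `q`-Weyl algebra `A_q = K⟨x,∂⟩/(∂x - q x ∂ = q - 1)`. -/
abbrev qWeyl (K : Type) [CommRing K] (q : K) : Type := RingQuot (qWeylRel K q)

/-- The generator `x` of the `q`-Weyl algebra. -/
noncomputable def qX (K : Type) [CommRing K] (q : K) : qWeyl K q :=
  RingQuot.mkAlgHom K (qWeylRel K q) (FreeAlgebra.ι K 0)

/-- The generator `∂` of the `q`-Weyl algebra. -/
noncomputable def qD (K : Type) [CommRing K] (q : K) : qWeyl K q :=
  RingQuot.mkAlgHom K (qWeylRel K q) (FreeAlgebra.ι K 1)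

section Aux

variable (K : Type) [Field K] (q : K) (hq : q ≠ 0)

/-- The defining relation in the quotient. -/
lemma qWeyl_rel : qD K q * qX K q = q • (qX K q * qD K q) + (q - 1) • 1 := by
  have h := RingQuot.mkAlgHom_rel K (qWeylRel.rel (K := K) (q := q))
  simpa [qX, qD, map_add, map_mul, map_smul, map_one] using h

include hq

/-- The scaling automorphism `x ↦ q x`, `∂ ↦ q⁻¹ ∂` as an algebra hom. -/
noncomputable def qSigma : qWeyl K q →ₐ[K] qWeyl K q :=
  RingQuot.liftAlgHom K
    ⟨FreeAlgebra.lift K (fun i => if i = 0 then q • qX K q else q⁻¹ • qD K q), by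
      rintro x y ⟨⟩
      simp only [map_mul, map_add, map_smul, map_one, FreeAlgebra.lift_ι_apply]
      norm_num [smul_smul, mul_inv_cancel₀ hq, inv_mul_cancel₀ hq]
      simpa [smul_smul, mul_inv_cancel₀ hq, inv_mul_cancel₀ hq, qX, qD]
        using qWeyl_rel K q⟩

lemma qSigma_x : qSigma K q hq (qX K q) = q • qX K q := by
  simp [qSigma, qX, RingQuot.liftAlgHom_mkAlgHom_apply, FreeAlgebra.lift_ι_apply]

lemma qSigma_d : qSigma K q hq (qD K q) = q⁻¹ • qD K q := by
  simp [qSigma, qD, RingQuot.liftAlgHom_mkAlgHom_apply, FreeAlgebra.lift_ι_apply]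

lemma alpha_comm (a : qWeyl K q) :
    (1 + qX K q * qD K q) * a = qSigma K q hq a * (1 + qX K q * qD K q) := by
  obtain ⟨f, rfl⟩ := RingQuot.mkAlgHom_surjective K (qWeylRel K q) a
  induction f using FreeAlgebra.induction with
  | grade0 r => simp [Algebra.commutes, map_smul, Algebra.smul_def, mul_assoc]
  | grade1 i =>
    fin_cases i
    · -- x: α x = q x α
      show (1 + qX K q * qD K q) * qX K q
          = qSigma K q hq (qX K q) * (1 + qX K q * qD K q)
      rw [qSigma_x]
      calc (1 + qX K q * qD K q) * qX K q
            = qX K q + qX K q * (qD K q * qX K q) := by noncomm_ring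
        _ = qX K q + qX K q * (q • (qX K q * qD K q) + (q - 1) • 1) := by
            rw [qWeyl_rel K q]
        _ = q • qX K q * (1 + qX K q * qD K q) := by
            simp only [mul_add, mul_one, mul_smul_comm, smul_mul_assoc, smul_add]
            module
    · -- ∂: α ∂ = q⁻¹ ∂ α
      show (1 + qX K q * qD K q) * qD K q
          = qSigma K q hq (qD K q) * (1 + qX K q * qD K q)
      rw [qSigma_d]
      have key : qD K q * (1 + qX K q * qD K q)
          = q • ((1 + qX K q * qD K q) * qD K q) := by
        calc qD K q * (1 + qX K q * qD K q)
              = qD K q + (qD K q * qX K q) * qD K q := by noncomm_ring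
          _ = qD K q + (q • (qX K q * qD K q) + (q - 1) • 1) * qD K q := by
              rw [qWeyl_rel K q]
          _ = q • ((1 + qX K q * qD K q) * qD K q) := by
              simp only [add_mul, one_mul, smul_mul_assoc, smul_add]
              module
      rw [smul_mul_assoc, key, smul_smul, inv_mul_cancel₀ hq, one_smul]
  | add f g hf hg => rw [map_add, map_add, mul_add, hf, hg, ← add_mul]
  | mul f g hf hg =>
    rw [map_mul, map_mul, ← mul_assoc, hf, mul_assoc, hg, ← mul_assoc]

lemma alpha_pow_comm (n : ℕ) : ∀ a : qWeyl K q,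
    (1 + qX K q * qD K q) ^ n * a = (qSigma K q hq)^[n] a * (1 + qX K q * qD K q) ^ n := by
  induction n with
  | zero => intro a; simp
  | succ k ih =>
    intro a
    rw [pow_succ, mul_assoc, alpha_comm K q hq, ← mul_assoc, ih, mul_assoc, ← pow_succ,
      ← Function.iterate_succ_apply]

end Aux

/-- In the `q`-Weyl algebra with `q` a unit, the powers of the Euler operator `α = 1 + x∂`
form an Ore set: for every `a` and every `n ≥ 1` there are `b` and `m ≥ 1` with
`αᵐ a = b αⁿ`. -/
theorem stmt8 (K : Type) [Field K] (q : K) (hq : q ≠ 0) :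
    ∀ (a : qWeyl K q) (n : ℕ), 1 ≤ n →
      ∃ (b : qWeyl K q) (m : ℕ), 1 ≤ m ∧
        (1 + qX K q * qD K q) ^ m * a = b * (1 + qX K q * qD K q) ^ n := by
  intro a n hn
  exact ⟨(qSigma K q hq)^[n] a, n, hn, alpha_pow_comm K q hq n a⟩
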